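/- arXiv:2410.02615 — 3 statements merged into one kernel-verified Lean document; each statement's English description precedes it below -/
import Mathlib

section
/- For any t, u ∈ [0,1], the interpolated structured graphs μ_t and μ_u (linearly interpolating features along an optimal alignment and using the interpolated structure distance (1−t)d_{s0} ⊕ t d_{s1}) satisfy d_SGA(μ_u, μ_t) ≤ |t − u| · d_SGA(μ_0, μ_1). In particular, linear feature interpolation along an optimal matching yields a path of at most proportional length. -/
open scoped BigOperators

/-- Cost of aligning structured graphs given by features in Euclidean space and
structure-distance matrices, via permutation `σ`. -/
noncomputable def alignCostM {M d : ℕ}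
    (f1 : Fin M → EuclideanSpace ℝ (Fin d)) (D1 : Fin M → Fin M → ℝ)
    (f2 : Fin M → EuclideanSpace ℝ (Fin d)) (D2 : Fin M → Fin M → ℝ)
    (σ : Equiv.Perm (Fin M)) : ℝ :=
  (∑ i, dist (f1 i) (f2 (σ i))) + ∑ i, ∑ k, |D1 i k - D2 (σ i) (σ k)|

/-- Second-order graph alignment discrepancy (matrix form). -/
noncomputable def dSGAM {M d : ℕ}
    (f1 : Fin M → EuclideanSpace ℝ (Fin d)) (D1 : Fin M → Fin M → ℝ)
    (f2 : Fin M → EuclideanSpace ℝ (Fin d)) (D2 : Fin M → Fin M → ℝ) : ℝ :=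
  ⨅ σ : Equiv.Perm (Fin M), alignCostM f1 D1 f2 D2 σ

/-- interpolated structured graphs along an optimal alignment satisfy
d_SGA(μ_u, μ_t) ≤ |t − u| · d_SGA(μ_0, μ_1). -/
theorem dSGA_interp_le {M d : ℕ} {S0 S1 : Type*} [MetricSpace S0] [MetricSpace S1]
    (f0 f1 : Fin M → EuclideanSpace ℝ (Fin d))
    (s0 : Fin M → S0) (s1 : Fin M → S1)
    (σ : Equiv.Perm (Fin M))
    (hopt : alignCostM f0 (fun i k => dist (s0 i) (s0 k))
        f1 (fun i k => dist (s1 i) (s1 k)) σ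
      = dSGAM f0 (fun i k => dist (s0 i) (s0 k)) f1 (fun i k => dist (s1 i) (s1 k)))
    (μf : ℝ → Fin M → EuclideanSpace ℝ (Fin d))
    (μD : ℝ → Fin M → Fin M → ℝ)
    (hμf : ∀ t i, μf t i = (1 - t) • f0 i + t • f1 (σ i))
    (hμD : ∀ t i k,
      μD t i k = (1 - t) * dist (s0 i) (s0 k) + t * dist (s1 (σ i)) (s1 (σ k)))
    (u t : ℝ) (hu : u ∈ Set.Icc (0:ℝ) 1) (ht : t ∈ Set.Icc (0:ℝ) 1) :
    dSGAM (μf u) (μD u) (μf t) (μD t)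
      ≤ |t - u| *
        dSGAM f0 (fun i k => dist (s0 i) (s0 k)) f1 (fun i k => dist (s1 i) (s1 k)) := by

  have hbdd : BddBelow (Set.range fun σ' : Equiv.Perm (Fin M) =>
      alignCostM (μf u) (μD u) (μf t) (μD t) σ') := by
    refine ⟨0, ?_⟩
    rintro x ⟨σ', rfl⟩
    unfold alignCostM
    positivity
  have h1 : dSGAM (μf u) (μD u) (μf t) (μD t) ≤
      alignCostM (μf u) (μD u) (μf t) (μD t) (Equiv.refl _) := ciInf_le hbdd _
  refine h1.trans ?_
  rw [← hopt]
  have hA : ∀ i, dist (μf u i) (μf t i) = |t - u| * dist (f0 i) (f1 (σ i)) := by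
    intro i
    rw [hμf, hμf, dist_eq_norm, dist_eq_norm]
    have h : ((1 - u) • f0 i + u • f1 (σ i)) - ((1 - t) • f0 i + t • f1 (σ i))
        = (t - u) • (f0 i - f1 (σ i)) := by module
    rw [h, norm_smul, Real.norm_eq_abs]
  have hB : ∀ i k, |μD u i k - μD t i k|
      = |t - u| * |dist (s0 i) (s0 k) - dist (s1 (σ i)) (s1 (σ k))| := by
    intro i k
    rw [hμD, hμD, ← abs_mul]
    congr 1
    ring
  simp only [alignCostM, Equiv.refl_apply, hA, hB]
  simp only [← Finset.mul_sum]
  rw [← mul_add]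
end

section
/- The interpolated structured graph path t ↦ μ_t along an optimal alignment is a constant speed geodesic: d_SGA(μ_u, μ_t) = |t − u| · d_SGA(μ_0, μ_1) for all u, t ∈ [0,1]. -/
open scoped BigOperators

variable {M d : ℕ}

lemma dSGAM_le_align (f1 : Fin M → EuclideanSpace ℝ (Fin d)) (D1 : Fin M → Fin M → ℝ)
    (f2 : Fin M → EuclideanSpace ℝ (Fin d)) (D2 : Fin M → Fin M → ℝ)
    (σ : Equiv.Perm (Fin M)) :
    dSGAM f1 D1 f2 D2 ≤ alignCostM f1 D1 f2 D2 σ :=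
  ciInf_le (Set.finite_range _).bddBelow σ

lemma exists_dSGAM_eq (f1 : Fin M → EuclideanSpace ℝ (Fin d)) (D1 : Fin M → Fin M → ℝ)
    (f2 : Fin M → EuclideanSpace ℝ (Fin d)) (D2 : Fin M → Fin M → ℝ) :
    ∃ σ, dSGAM f1 D1 f2 D2 = alignCostM f1 D1 f2 D2 σ := by
  obtain ⟨σ, hσ⟩ := Finite.exists_min (alignCostM f1 D1 f2 D2)
  exact ⟨σ, le_antisymm (dSGAM_le_align _ _ _ _ σ) (le_ciInf hσ)⟩

lemma alignCostM_triangle (f1 : Fin M → EuclideanSpace ℝ (Fin d)) (D1 : Fin M → Fin M → ℝ)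
    (f2 : Fin M → EuclideanSpace ℝ (Fin d)) (D2 : Fin M → Fin M → ℝ)
    (f3 : Fin M → EuclideanSpace ℝ (Fin d)) (D3 : Fin M → Fin M → ℝ)
    (σ τ : Equiv.Perm (Fin M)) :
    alignCostM f1 D1 f3 D3 (σ.trans τ) ≤
      alignCostM f1 D1 f2 D2 σ + alignCostM f2 D2 f3 D3 τ := by
  have h1 : ∑ i, dist (f2 i) (f3 (τ i)) = ∑ i, dist (f2 (σ i)) (f3 (τ (σ i))) :=
    (Equiv.sum_comp σ fun i => dist (f2 i) (f3 (τ i))).symm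
  have h2 : ∑ i, ∑ k, |D2 i k - D3 (τ i) (τ k)|
      = ∑ i, ∑ k, |D2 (σ i) (σ k) - D3 (τ (σ i)) (τ (σ k))| := by
    rw [← Equiv.sum_comp σ (fun i => ∑ k, |D2 i k - D3 (τ i) (τ k)|)]
    exact Finset.sum_congr rfl fun i _ =>
      (Equiv.sum_comp σ fun k => |D2 (σ i) k - D3 (τ (σ i)) (τ k)|).symm
  have hf : ∑ i, dist (f1 i) (f3 (τ (σ i)))
      ≤ (∑ i, dist (f1 i) (f2 (σ i))) + ∑ i, dist (f2 (σ i)) (f3 (τ (σ i))) := by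
    rw [← Finset.sum_add_distrib]
    exact Finset.sum_le_sum fun i _ => dist_triangle _ _ _
  have hD : ∑ i, ∑ k, |D1 i k - D3 (τ (σ i)) (τ (σ k))|
      ≤ (∑ i, ∑ k, |D1 i k - D2 (σ i) (σ k)|)
        + ∑ i, ∑ k, |D2 (σ i) (σ k) - D3 (τ (σ i)) (τ (σ k))| := by
    rw [← Finset.sum_add_distrib]
    refine Finset.sum_le_sum fun i _ => ?_
    rw [← Finset.sum_add_distrib]
    exact Finset.sum_le_sum fun k _ => abs_sub_le _ _ _
  unfold alignCostM
  simp only [Equiv.trans_apply]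
  rw [h1, h2]
  linarith

lemma dSGAM_triangle (f1 : Fin M → EuclideanSpace ℝ (Fin d)) (D1 : Fin M → Fin M → ℝ)
    (f2 : Fin M → EuclideanSpace ℝ (Fin d)) (D2 : Fin M → Fin M → ℝ)
    (f3 : Fin M → EuclideanSpace ℝ (Fin d)) (D3 : Fin M → Fin M → ℝ) :
    dSGAM f1 D1 f3 D3 ≤ dSGAM f1 D1 f2 D2 + dSGAM f2 D2 f3 D3 := by
  obtain ⟨σ, hσ⟩ := exists_dSGAM_eq f1 D1 f2 D2
  obtain ⟨τ, hτ⟩ := exists_dSGAM_eq f2 D2 f3 D3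
  rw [hσ, hτ]
  exact (dSGAM_le_align _ _ _ _ (σ.trans τ)).trans
    (alignCostM_triangle f1 D1 f2 D2 f3 D3 σ τ)

lemma alignCostM_reindex (f0 : Fin M → EuclideanSpace ℝ (Fin d)) (D0 : Fin M → Fin M → ℝ)
    (f1 : Fin M → EuclideanSpace ℝ (Fin d)) (D1 : Fin M → Fin M → ℝ)
    (σ τ : Equiv.Perm (Fin M)) :
    alignCostM f0 D0 (fun i => f1 (σ i)) (fun i k => D1 (σ i) (σ k)) τ
      = alignCostM f0 D0 f1 D1 (τ.trans σ) := rfl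

lemma dSGAM_reindex (f0 : Fin M → EuclideanSpace ℝ (Fin d)) (D0 : Fin M → Fin M → ℝ)
    (f1 : Fin M → EuclideanSpace ℝ (Fin d)) (D1 : Fin M → Fin M → ℝ)
    (σ : Equiv.Perm (Fin M)) :
    dSGAM f0 D0 (fun i => f1 (σ i)) (fun i k => D1 (σ i) (σ k)) = dSGAM f0 D0 f1 D1 := by
  apply le_antisymm
  · obtain ⟨ρ, hρ⟩ := exists_dSGAM_eq f0 D0 f1 D1
    have h : (ρ.trans σ⁻¹).trans σ = ρ := by ext x; simp
    calc dSGAM f0 D0 (fun i => f1 (σ i)) (fun i k => D1 (σ i) (σ k))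
        ≤ alignCostM f0 D0 (fun i => f1 (σ i)) (fun i k => D1 (σ i) (σ k)) (ρ.trans σ⁻¹) :=
          dSGAM_le_align _ _ _ _ _
      _ = alignCostM f0 D0 f1 D1 ρ := by rw [alignCostM_reindex, h]
      _ = dSGAM f0 D0 f1 D1 := hρ.symm
  · obtain ⟨τ, hτ⟩ := exists_dSGAM_eq f0 D0 (fun i => f1 (σ i)) (fun i k => D1 (σ i) (σ k))
    calc dSGAM f0 D0 f1 D1 ≤ alignCostM f0 D0 f1 D1 (τ.trans σ) := dSGAM_le_align _ _ _ _ _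
      _ = alignCostM f0 D0 (fun i => f1 (σ i)) (fun i k => D1 (σ i) (σ k)) τ :=
          (alignCostM_reindex _ _ _ _ _ _).symm
      _ = dSGAM f0 D0 (fun i => f1 (σ i)) (fun i k => D1 (σ i) (σ k)) := hτ.symm

lemma interp_cost_refl (f0 f1 : Fin M → EuclideanSpace ℝ (Fin d)) (D0 D1 : Fin M → Fin M → ℝ)
    (u t : ℝ) :
    alignCostM (fun i => (1-u) • f0 i + u • f1 i) (fun i k => (1-u) * D0 i k + u * D1 i k)
               (fun i => (1-t) • f0 i + t • f1 i) (fun i k => (1-t) * D0 i k + t * D1 i k)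
               (Equiv.refl _)
      = |t - u| * alignCostM f0 D0 f1 D1 (Equiv.refl _) := by
  unfold alignCostM
  simp only [Equiv.refl_apply]
  have hdist : ∀ i, dist ((1-u) • f0 i + u • f1 i) ((1-t) • f0 i + t • f1 i)
      = |t - u| * dist (f0 i) (f1 i) := by
    intro i
    rw [dist_eq_norm, dist_eq_norm]
    have h : ((1-u) • f0 i + u • f1 i) - ((1-t) • f0 i + t • f1 i)
        = (t - u) • (f0 i - f1 i) := by module
    rw [h, norm_smul, Real.norm_eq_abs]
  have habs : ∀ i k, |((1-u) * D0 i k + u * D1 i k) - ((1-t) * D0 i k + t * D1 i k)|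
      = |t - u| * |D0 i k - D1 i k| := by
    intro i k
    rw [← abs_mul]
    congr 1
    ring
  simp only [hdist, habs, ← Finset.mul_sum]
  ring

lemma dSGAM_symm (f1 : Fin M → EuclideanSpace ℝ (Fin d)) (D1 : Fin M → Fin M → ℝ)
    (f2 : Fin M → EuclideanSpace ℝ (Fin d)) (D2 : Fin M → Fin M → ℝ) :
    dSGAM f1 D1 f2 D2 = dSGAM f2 D2 f1 D1 := by
  have key : ∀ (g1 : Fin M → EuclideanSpace ℝ (Fin d)) (E1 : Fin M → Fin M → ℝ)
      (g2 : Fin M → EuclideanSpace ℝ (Fin d)) (E2 : Fin M → Fin M → ℝ)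
      (σ : Equiv.Perm (Fin M)),
      alignCostM g2 E2 g1 E1 σ⁻¹ = alignCostM g1 E1 g2 E2 σ := by
    intro g1 E1 g2 E2 σ
    unfold alignCostM
    congr 1
    · rw [← Equiv.sum_comp σ (fun i => dist (g2 i) (g1 (σ⁻¹ i)))]
      simp [dist_comm]
    · rw [← Equiv.sum_comp σ (fun i => ∑ k, |E2 i k - E1 (σ⁻¹ i) (σ⁻¹ k)|)]
      refine Finset.sum_congr rfl fun i _ => ?_
      rw [← Equiv.sum_comp σ (fun k => |E2 (σ i) k - E1 (σ⁻¹ (σ i)) (σ⁻¹ k)|)]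
      simp [abs_sub_comm]
  have hle : ∀ (g1 : Fin M → EuclideanSpace ℝ (Fin d)) (E1 : Fin M → Fin M → ℝ)
      (g2 : Fin M → EuclideanSpace ℝ (Fin d)) (E2 : Fin M → Fin M → ℝ),
      dSGAM g2 E2 g1 E1 ≤ dSGAM g1 E1 g2 E2 := by
    intro g1 E1 g2 E2
    obtain ⟨σ, hσ⟩ := exists_dSGAM_eq g1 E1 g2 E2
    rw [hσ, ← key]
    exact dSGAM_le_align _ _ _ _ _
  exact le_antisymm (hle f2 D2 f1 D1) (hle f1 D1 f2 D2)

lemma interp_main (f0 F1 : Fin M → EuclideanSpace ℝ (Fin d))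
    (D0 DD1 : Fin M → Fin M → ℝ)
    (hstar : alignCostM f0 D0 F1 DD1 (Equiv.refl _) = dSGAM f0 D0 F1 DD1)
    (u t : ℝ) (hu : u ∈ Set.Icc (0:ℝ) 1) (ht : t ∈ Set.Icc (0:ℝ) 1) :
    dSGAM (fun i => (1-u) • f0 i + u • F1 i) (fun i k => (1-u) * D0 i k + u * DD1 i k)
          (fun i => (1-t) • f0 i + t • F1 i) (fun i k => (1-t) * D0 i k + t * DD1 i k)
      = |t - u| * dSGAM f0 D0 F1 DD1 := by
  set e := dSGAM f0 D0 F1 DD1 with he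
  have upper : ∀ a b : ℝ,
      dSGAM (fun i => (1-a) • f0 i + a • F1 i) (fun i k => (1-a) * D0 i k + a * DD1 i k)
            (fun i => (1-b) • f0 i + b • F1 i) (fun i k => (1-b) * D0 i k + b * DD1 i k)
        ≤ |b - a| * e := by
    intro a b
    calc dSGAM _ _ _ _ ≤ alignCostM
          (fun i => (1-a) • f0 i + a • F1 i) (fun i k => (1-a) * D0 i k + a * DD1 i k)
          (fun i => (1-b) • f0 i + b • F1 i) (fun i k => (1-b) * D0 i k + b * DD1 i k)
          (Equiv.refl _) := dSGAM_le_align _ _ _ _ _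
      _ = |b - a| * alignCostM f0 D0 F1 DD1 (Equiv.refl _) := interp_cost_refl _ _ _ _ _ _
      _ = |b - a| * e := by rw [hstar]
  have key : ∀ a b : ℝ, 0 ≤ a → b ≤ 1 → a ≤ b →
      dSGAM (fun i => (1-a) • f0 i + a • F1 i) (fun i k => (1-a) * D0 i k + a * DD1 i k)
            (fun i => (1-b) • f0 i + b • F1 i) (fun i k => (1-b) * D0 i k + b * DD1 i k)
        = (b - a) * e := by
    intro a b ha hb hab
    have hub := upper a b
    rw [abs_of_nonneg (by linarith : (0:ℝ) ≤ b - a)] at hub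
    have hi0f : (fun i => (1-(0:ℝ)) • f0 i + (0:ℝ) • F1 i) = f0 := funext fun i => by simp
    have hi0D : (fun i k => (1-(0:ℝ)) * D0 i k + (0:ℝ) * DD1 i k) = D0 :=
      funext fun i => funext fun k => by simp
    have hi1f : (fun i => (1-(1:ℝ)) • f0 i + (1:ℝ) • F1 i) = F1 := funext fun i => by simp
    have hi1D : (fun i k => (1-(1:ℝ)) * D0 i k + (1:ℝ) * DD1 i k) = DD1 :=
      funext fun i => funext fun k => by simp
    have h0a := upper 0 a
    rw [hi0f, hi0D, sub_zero, abs_of_nonneg ha] at h0a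
    have hb1 := upper b 1
    rw [abs_of_nonneg (by linarith : (0:ℝ) ≤ 1 - b), hi1f, hi1D] at hb1
    have t1 : e ≤ dSGAM f0 D0
          (fun i => (1-a) • f0 i + a • F1 i) (fun i k => (1-a) * D0 i k + a * DD1 i k)
        + dSGAM (fun i => (1-a) • f0 i + a • F1 i) (fun i k => (1-a) * D0 i k + a * DD1 i k)
            F1 DD1 := by
      rw [he]
      exact dSGAM_triangle _ _ _ _ _ _
    have t2 : dSGAM (fun i => (1-a) • f0 i + a • F1 i)
          (fun i k => (1-a) * D0 i k + a * DD1 i k) F1 DD1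
        ≤ dSGAM (fun i => (1-a) • f0 i + a • F1 i) (fun i k => (1-a) * D0 i k + a * DD1 i k)
            (fun i => (1-b) • f0 i + b • F1 i) (fun i k => (1-b) * D0 i k + b * DD1 i k)
          + dSGAM (fun i => (1-b) • f0 i + b • F1 i) (fun i k => (1-b) * D0 i k + b * DD1 i k)
            F1 DD1 := dSGAM_triangle _ _ _ _ _ _
    have hsymm : dSGAM f0 D0
          (fun i => (1-a) • f0 i + a • F1 i) (fun i k => (1-a) * D0 i k + a * DD1 i k)
        = dSGAM (fun i => (1-a) • f0 i + a • F1 i)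
            (fun i k => (1-a) * D0 i k + a * DD1 i k) f0 D0 := dSGAM_symm _ _ _ _
    rw [hsymm] at t1
    linarith
  rcases le_total u t with h | h
  · rw [key u t hu.1 ht.2 h, abs_of_nonneg (by linarith : (0:ℝ) ≤ t - u)]
  · rw [dSGAM_symm, key t u ht.1 hu.2 h, abs_sub_comm,
      abs_of_nonneg (by linarith : (0:ℝ) ≤ u - t)]


/-- the interpolated path along an optimal alignment is a constant
speed geodesic: d_SGA(μ_u, μ_t) = |t − u| · d_SGA(μ_0, μ_1). -/
theorem dSGA_interp_eq {M d : ℕ} {S0 S1 : Type*} [MetricSpace S0] [MetricSpace S1]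
    (f0 f1 : Fin M → EuclideanSpace ℝ (Fin d))
    (s0 : Fin M → S0) (s1 : Fin M → S1)
    (σ : Equiv.Perm (Fin M))
    (hopt : alignCostM f0 (fun i k => dist (s0 i) (s0 k))
        f1 (fun i k => dist (s1 i) (s1 k)) σ
      = dSGAM f0 (fun i k => dist (s0 i) (s0 k)) f1 (fun i k => dist (s1 i) (s1 k)))
    (μf : ℝ → Fin M → EuclideanSpace ℝ (Fin d))
    (μD : ℝ → Fin M → Fin M → ℝ)
    (hμf : ∀ t i, μf t i = (1 - t) • f0 i + t • f1 (σ i))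
    (hμD : ∀ t i k,
      μD t i k = (1 - t) * dist (s0 i) (s0 k) + t * dist (s1 (σ i)) (s1 (σ k)))
    (u t : ℝ) (hu : u ∈ Set.Icc (0:ℝ) 1) (ht : t ∈ Set.Icc (0:ℝ) 1) :
    dSGAM (μf u) (μD u) (μf t) (μD t)
      = |t - u| *
        dSGAM f0 (fun i k => dist (s0 i) (s0 k)) f1 (fun i k => dist (s1 i) (s1 k)) := by
  have hF : dSGAM f0 (fun i k => dist (s0 i) (s0 k))
      (fun i => f1 (σ i)) (fun i k => dist (s1 (σ i)) (s1 (σ k)))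
      = dSGAM f0 (fun i k => dist (s0 i) (s0 k)) f1 (fun i k => dist (s1 i) (s1 k)) :=
    dSGAM_reindex f0 _ f1 (fun i k => dist (s1 i) (s1 k)) σ
  have hstar : alignCostM f0 (fun i k => dist (s0 i) (s0 k))
      (fun i => f1 (σ i)) (fun i k => dist (s1 (σ i)) (s1 (σ k))) (Equiv.refl _)
      = dSGAM f0 (fun i k => dist (s0 i) (s0 k))
          (fun i => f1 (σ i)) (fun i k => dist (s1 (σ i)) (s1 (σ k))) := by
    have h1 : alignCostM f0 (fun i k => dist (s0 i) (s0 k))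
        (fun i => f1 (σ i)) (fun i k => dist (s1 (σ i)) (s1 (σ k))) (Equiv.refl _)
        = alignCostM f0 (fun i k => dist (s0 i) (s0 k))
            f1 (fun i k => dist (s1 i) (s1 k)) ((Equiv.refl _).trans σ) :=
      alignCostM_reindex f0 _ f1 (fun i k => dist (s1 i) (s1 k)) σ (Equiv.refl _)
    rw [h1, Equiv.refl_trans, hopt, ← hF]
  have e1 : μf u = fun i => (1-u) • f0 i + u • f1 (σ i) := funext fun i => hμf u i
  have e2 : μf t = fun i => (1-t) • f0 i + t • f1 (σ i) := funext fun i => hμf t i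
  have e3 : μD u = fun i k => (1-u) * dist (s0 i) (s0 k) + u * dist (s1 (σ i)) (s1 (σ k)) :=
    funext fun i => funext fun k => hμD u i k
  have e4 : μD t = fun i k => (1-t) * dist (s0 i) (s0 k) + t * dist (s1 (σ i)) (s1 (σ k)) :=
    funext fun i => funext fun k => hμD t i k
  rw [e1, e2, e3, e4, ← hF]
  exact interp_main f0 (fun i => f1 (σ i)) (fun i k => dist (s0 i) (s0 k))
    (fun i k => dist (s1 (σ i)) (s1 (σ k))) hstar u t hu ht
end

section
/- Geodesic midpoint property: with μ_t the interpolated graphs along an optimal alignment of G0 and G1, the midpoint μ_{1/2} satisfies d_SGA(μ_0, μ_{1/2}) ≤ (1/2) d_SGA(μ_0, μ_1) and d_SGA(μ_{1/2}, μ_1) ≤ (1/2) d_SGA(μ_0, μ_1). -/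
open scoped BigOperators

lemma dist_half_left {E : Type*} [NormedAddCommGroup E] [NormedSpace ℝ E] (a b : E) :
    dist a ((1 - (1/2 : ℝ)) • a + (1/2 : ℝ) • b) = (1/2) * dist a b := by
  rw [dist_eq_norm, dist_eq_norm]
  have h : a - ((1 - (1/2 : ℝ)) • a + (1/2 : ℝ) • b) = (1/2 : ℝ) • (a - b) := by
    module
  rw [h, norm_smul]
  norm_num

lemma dist_half_right {E : Type*} [NormedAddCommGroup E] [NormedSpace ℝ E] (a b : E) :
    dist ((1 - (1/2 : ℝ)) • a + (1/2 : ℝ) • b) b = (1/2) * dist a b := by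
  rw [dist_eq_norm, dist_eq_norm]
  have h : ((1 - (1/2 : ℝ)) • a + (1/2 : ℝ) • b) - b = (1/2 : ℝ) • (a - b) := by
    module
  rw [h, norm_smul]
  norm_num

lemma dSGAM_le {M d : ℕ}
    (f1 : Fin M → EuclideanSpace ℝ (Fin d)) (D1 : Fin M → Fin M → ℝ)
    (f2 : Fin M → EuclideanSpace ℝ (Fin d)) (D2 : Fin M → Fin M → ℝ)
    (σ : Equiv.Perm (Fin M)) :
    dSGAM f1 D1 f2 D2 ≤ alignCostM f1 D1 f2 D2 σ := by
  exact ciInf_le (Set.Finite.bddBelow (Set.finite_range _)) σ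

/-- the midpoint of the interpolated path is a metric midpoint up to
a factor 1/2 on each side. -/
theorem dSGA_midpoint {M d : ℕ} {S0 S1 : Type*} [MetricSpace S0] [MetricSpace S1]
    (f0 f1 : Fin M → EuclideanSpace ℝ (Fin d))
    (s0 : Fin M → S0) (s1 : Fin M → S1)
    (σ : Equiv.Perm (Fin M))
    (hopt : alignCostM f0 (fun i k => dist (s0 i) (s0 k))
        f1 (fun i k => dist (s1 i) (s1 k)) σ
      = dSGAM f0 (fun i k => dist (s0 i) (s0 k)) f1 (fun i k => dist (s1 i) (s1 k)))
    (μf : ℝ → Fin M → EuclideanSpace ℝ (Fin d))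
    (μD : ℝ → Fin M → Fin M → ℝ)
    (hμf : ∀ t i, μf t i = (1 - t) • f0 i + t • f1 (σ i))
    (hμD : ∀ t i k,
      μD t i k = (1 - t) * dist (s0 i) (s0 k) + t * dist (s1 (σ i)) (s1 (σ k))) :
    dSGAM (μf 0) (μD 0) (μf (1/2)) (μD (1/2))
        ≤ (1/2) *
          dSGAM f0 (fun i k => dist (s0 i) (s0 k)) f1 (fun i k => dist (s1 i) (s1 k))
      ∧ dSGAM (μf (1/2)) (μD (1/2)) (μf 1) (μD 1)
        ≤ (1/2) *
          dSGAM f0 (fun i k => dist (s0 i) (s0 k)) f1 (fun i k => dist (s1 i) (s1 k)) := by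
  set D0 : Fin M → Fin M → ℝ := fun i k => dist (s0 i) (s0 k) with hD0
  set D1 : Fin M → Fin M → ℝ := fun i k => dist (s1 i) (s1 k) with hD1
  have key1 : alignCostM (μf 0) (μD 0) (μf (1/2)) (μD (1/2)) 1
      = (1/2) * alignCostM f0 D0 f1 D1 σ := by
    simp only [alignCostM, Equiv.Perm.coe_one, id_eq, mul_add, Finset.mul_sum]
    congr 1
    · refine Finset.sum_congr rfl fun i _ => ?_
      rw [hμf 0 i, hμf (1/2) i]
      simp only [sub_zero, one_smul, zero_smul, add_zero]
      exact dist_half_left _ _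
    · refine Finset.sum_congr rfl fun i _ => ?_
      refine Finset.sum_congr rfl fun k _ => ?_
      rw [hμD 0 i k, hμD (1/2) i k]
      have : (1 - 0 : ℝ) * D0 i k + 0 * D1 (σ i) (σ k)
          - ((1 - 1/2) * D0 i k + 1/2 * D1 (σ i) (σ k))
          = (1/2) * (D0 i k - D1 (σ i) (σ k)) := by ring
      rw [this, abs_mul]
      norm_num
  have key2 : alignCostM (μf (1/2)) (μD (1/2)) (μf 1) (μD 1) 1
      = (1/2) * alignCostM f0 D0 f1 D1 σ := by
    simp only [alignCostM, Equiv.Perm.coe_one, id_eq, mul_add, Finset.mul_sum]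
    congr 1
    · refine Finset.sum_congr rfl fun i _ => ?_
      rw [hμf (1/2) i, hμf 1 i]
      simp only [sub_self, zero_smul, one_smul, zero_add]
      exact dist_half_right _ _
    · refine Finset.sum_congr rfl fun i _ => ?_
      refine Finset.sum_congr rfl fun k _ => ?_
      rw [hμD (1/2) i k, hμD 1 i k]
      have : ((1 - 1/2) * D0 i k + 1/2 * D1 (σ i) (σ k))
          - ((1 - 1 : ℝ) * D0 i k + 1 * D1 (σ i) (σ k))
          = (1/2) * (D0 i k - D1 (σ i) (σ k)) := by ring
      rw [this, abs_mul]
      norm_num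
  constructor
  · calc dSGAM (μf 0) (μD 0) (μf (1/2)) (μD (1/2))
        ≤ alignCostM (μf 0) (μD 0) (μf (1/2)) (μD (1/2)) 1 := dSGAM_le _ _ _ _ _
      _ = (1/2) * alignCostM f0 D0 f1 D1 σ := key1
      _ = _ := by rw [hopt]
  · calc dSGAM (μf (1/2)) (μD (1/2)) (μf 1) (μD 1)
        ≤ alignCostM (μf (1/2)) (μD (1/2)) (μf 1) (μD 1) 1 := dSGAM_le _ _ _ _ _
      _ = (1/2) * alignCostM f0 D0 f1 D1 σ := key2
      _ = _ := by rw [hopt]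
end
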